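/- Assume 1 < p ≤ 2. There exist constants C₁, C₂ > 0, depending only on p and n, such that for every κ ≥ 0 and all matrices A, B ∈ ℝ^{n×n} it holds that |S(A) − S(B)|^{p'} ≤ C₁·|V(A) − V(B)|² and |V(A) − V(B)|² ≤ C₂·|A − B|^p. -/

import Mathlib

open scoped BigOperators

/-- Frobenius inner product `A : B = ∑ᵢⱼ Aᵢⱼ Bᵢⱼ` on `n × n` real matrices. -/
noncomputable def fdot {n : ℕ} (A B : Matrix (Fin n) (Fin n) ℝ) : ℝ :=
  ∑ i, ∑ j, A i j * B i j

/-- Frobenius norm `|A| = (∑ᵢⱼ Aᵢⱼ²)^{1/2}` on `n × n` real matrices. -/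
noncomputable def fnorm {n : ℕ} (A : Matrix (Fin n) (Fin n) ℝ) : ℝ :=
  Real.sqrt (∑ i, ∑ j, (A i j) ^ 2)

/-- `S(A) = (κ + |A|)^{p-2} A`. -/
noncomputable def Smap {n : ℕ} (p κ : ℝ) (A : Matrix (Fin n) (Fin n) ℝ) :
    Matrix (Fin n) (Fin n) ℝ :=
  ((κ + fnorm A) ^ (p - 2)) • A

/-- `V(A) = (κ + |A|)^{(p-2)/2} A`. -/
noncomputable def Vmap {n : ℕ} (p κ : ℝ) (A : Matrix (Fin n) (Fin n) ℝ) :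
    Matrix (Fin n) (Fin n) ℝ :=
  ((κ + fnorm A) ^ ((p - 2) / 2)) • A

/-! ### Auxiliary scalar lemmas -/

/-- Scalar upper bound: `((κ+b)^s - (κ+a)^s) * b ≤ (κ+a)^s * (a-b)` for `-1 ≤ s ≤ 0`. -/
lemma aux_sc_upper {s κ a b : ℝ} (hs0 : s ≤ 0) (hs1 : -1 ≤ s) (hκ : 0 ≤ κ)
    (hb : 0 ≤ b) (hba : b ≤ a) :
    ((κ + b) ^ s - (κ + a) ^ s) * b ≤ (κ + a) ^ s * (a - b) := by
  rcases eq_or_lt_of_le (by linarith : (0:ℝ) ≤ κ + b) with h0 | hkb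
  · have hb0 : b = 0 := by linarith
    subst hb0
    simpa using mul_nonneg (Real.rpow_nonneg (by linarith) s) (by linarith : (0:ℝ) ≤ a - 0)
  · have hka : 0 < κ + a := by linarith
    have h1 : (κ + b) ^ (s + 1) ≤ (κ + a) ^ (s + 1) :=
      Real.rpow_le_rpow hkb.le (by linarith) (by linarith)
    have e1 : (κ + a) ^ (s + 1) = (κ + a) ^ s * (κ + a) := Real.rpow_add_one hka.ne' s
    have e2 : (κ + b) ^ (s + 1) = (κ + b) ^ s * (κ + b) := Real.rpow_add_one hkb.ne' s
    have hbs : 0 ≤ (κ + b) ^ s := Real.rpow_nonneg hkb.le s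
    have step : ((κ + b) ^ s - (κ + a) ^ s) * b * (κ + a) ≤ (κ + a) ^ s * (a - b) * (κ + a) := by
      nlinarith [mul_nonneg (by linarith : (0:ℝ) ≤ a) (sub_nonneg.2 h1),
        mul_nonneg (mul_nonneg (sub_nonneg.2 hba) hκ) hbs]
    exact le_of_mul_le_mul_right step hka

/-- Scalar lower bound: `(1+s)·(κ+a)^s·(a-b) ≤ (κ+a)^s·a - (κ+b)^s·b` for `-1 < s ≤ 0`. -/
lemma aux_sc_lower {s κ a b : ℝ} (hs0 : s ≤ 0) (hs1 : -1 < s) (hκ : 0 ≤ κ)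
    (hb : 0 ≤ b) (hba : b ≤ a) :
    (1 + s) * (κ + a) ^ s * (a - b) ≤ (κ + a) ^ s * a - (κ + b) ^ s * b := by
  rcases eq_or_lt_of_le hb with hb0 | hbpos
  · subst hb0
    have := mul_nonneg (Real.rpow_nonneg (by linarith : (0:ℝ) ≤ κ + a) s) (by linarith : (0:ℝ) ≤ a)
    nlinarith
  · have hkb : 0 < κ + b := by linarith
    have hka : 0 < κ + a := by linarith
    set r := (a - b) / (κ + b) with hr
    have hr0 : 0 ≤ r := div_nonneg (by linarith) hkb.le
    have hone : κ + a = (κ + b) * (1 + r) := by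
      rw [hr, mul_add, mul_one, mul_div_assoc', mul_div_cancel_left₀ (a - b) hkb.ne']; ring
    have hbern : (1 + r) ^ (-s) ≤ 1 + (-s) * r :=
      rpow_one_add_le_one_add_mul_self (by linarith) (by linarith) (by linarith)
    have hα : (κ + a) ^ s = (κ + b) ^ s * (1 + r) ^ s := by
      rw [hone, Real.mul_rpow hkb.le (by linarith : (0:ℝ) ≤ 1 + r)]
    have hβα : (κ + b) ^ s = (κ + a) ^ s * (1 + r) ^ (-s) := by
      rw [hα, mul_assoc, ← Real.rpow_add (by linarith : (0:ℝ) < 1 + r), add_neg_cancel,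
        Real.rpow_zero, mul_one]
    have hαpos : 0 ≤ (κ + a) ^ s := Real.rpow_nonneg hka.le s
    have hrb : r * b ≤ a - b := by
      rw [hr, div_mul_eq_mul_div, div_le_iff₀ hkb]
      nlinarith
    have h2 : (κ + b) ^ s * b ≤ (κ + a) ^ s * (b + (-s) * (a - b)) := by
      rw [hβα, mul_assoc]
      have hstep : (1 + r) ^ (-s) * b ≤ b + (-s) * (a - b) := by
        have h3 : (1 + r) ^ (-s) * b ≤ (1 + (-s) * r) * b :=
          mul_le_mul_of_nonneg_right hbern hb
        have h4 : (-s) * (r * b) ≤ (-s) * (a - b) :=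
          mul_le_mul_of_nonneg_left hrb (by linarith)
        nlinarith
      exact mul_le_mul_of_nonneg_left hstep hαpos
    nlinarith [h2]

/-! ### Auxiliary vector lemmas (in a real inner product space) -/

section Vec

variable {E : Type*} [NormedAddCommGroup E] [InnerProductSpace ℝ E]

lemma aux_vec_upper {s κ : ℝ} (hs0 : s ≤ 0) (hs1 : -1 ≤ s) (hκ : 0 ≤ κ)
    {u v : E} (hvu : ‖v‖ ≤ ‖u‖) :
    ‖((κ + ‖u‖) ^ s) • u - ((κ + ‖v‖) ^ s) • v‖ ≤ 2 * (κ + ‖u‖) ^ s * ‖u - v‖ := by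
  have hb : (0:ℝ) ≤ ‖v‖ := norm_nonneg v
  have hα : 0 ≤ (κ + ‖u‖) ^ s := Real.rpow_nonneg (by linarith [norm_nonneg u]) s
  have key : ((κ + ‖u‖) ^ s) • u - ((κ + ‖v‖) ^ s) • v
      = ((κ + ‖u‖) ^ s) • (u - v) + ((κ + ‖u‖) ^ s - (κ + ‖v‖) ^ s) • v := by
    rw [smul_sub, sub_smul]; abel
  have hterm : |(κ + ‖u‖) ^ s - (κ + ‖v‖) ^ s| * ‖v‖ ≤ (κ + ‖u‖) ^ s * (‖u‖ - ‖v‖) := by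
    rcases eq_or_lt_of_le (by linarith : (0:ℝ) ≤ κ + ‖v‖) with h0 | hkb
    · have hb0 : ‖v‖ = 0 := by linarith
      rw [hb0, mul_zero]
      exact mul_nonneg hα (by linarith)
    · have hαβ : (κ + ‖u‖) ^ s ≤ (κ + ‖v‖) ^ s :=
        Real.rpow_le_rpow_of_nonpos hkb (by linarith) hs0
      rw [abs_of_nonpos (by linarith), neg_sub]
      exact aux_sc_upper hs0 hs1 hκ hb hvu
  calc ‖((κ + ‖u‖) ^ s) • u - ((κ + ‖v‖) ^ s) • v‖
      ≤ ‖((κ + ‖u‖) ^ s) • (u - v)‖ + ‖((κ + ‖u‖) ^ s - (κ + ‖v‖) ^ s) • v‖ := by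
        rw [key]; exact norm_add_le _ _
    _ = (κ + ‖u‖) ^ s * ‖u - v‖ + |(κ + ‖u‖) ^ s - (κ + ‖v‖) ^ s| * ‖v‖ := by
        rw [norm_smul, norm_smul, Real.norm_eq_abs, Real.norm_eq_abs, abs_of_nonneg hα]
    _ ≤ 2 * (κ + ‖u‖) ^ s * ‖u - v‖ := by
        have h2 : (κ + ‖u‖) ^ s * (‖u‖ - ‖v‖) ≤ (κ + ‖u‖) ^ s * ‖u - v‖ :=
          mul_le_mul_of_nonneg_left (norm_sub_norm_le u v) hα
        linarith [hterm]

lemma aux_vec_lower {s κ : ℝ} (hs0 : s ≤ 0) (hs1 : -1 < s) (hκ : 0 ≤ κ)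
    {u v : E} (hvu : ‖v‖ ≤ ‖u‖) :
    ((1 + s) * (κ + ‖u‖) ^ s) ^ 2 * ‖u - v‖ ^ 2
      ≤ ‖((κ + ‖u‖) ^ s) • u - ((κ + ‖v‖) ^ s) • v‖ ^ 2 := by
  have ha : (0:ℝ) ≤ ‖u‖ := norm_nonneg u
  have hα : 0 ≤ (κ + ‖u‖) ^ s := Real.rpow_nonneg (by linarith) s
  rcases eq_or_lt_of_le (norm_nonneg v) with hb0 | hbpos
  · have hv : v = 0 := norm_eq_zero.1 hb0.symm
    subst hv
    rw [smul_zero, sub_zero, sub_zero, norm_smul, Real.norm_eq_abs, abs_of_nonneg hα]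
    have h1s : 0 ≤ 1 + s := by linarith
    have hle : (1 + s) * (κ + ‖u‖) ^ s ≤ (κ + ‖u‖) ^ s := by nlinarith
    have h0 : 0 ≤ (1 + s) * (κ + ‖u‖) ^ s := mul_nonneg h1s hα
    calc ((1 + s) * (κ + ‖u‖) ^ s) ^ 2 * ‖u‖ ^ 2
        ≤ ((κ + ‖u‖) ^ s) ^ 2 * ‖u‖ ^ 2 := by
          exact mul_le_mul_of_nonneg_right (pow_le_pow_left₀ h0 hle 2) (by positivity)
      _ = ((κ + ‖u‖) ^ s * ‖u‖) ^ 2 := by ring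
  · have hkb : 0 < κ + ‖v‖ := by linarith
    have hka : 0 < κ + ‖u‖ := by linarith
    set α := (κ + ‖u‖) ^ s with hαdef
    set β := (κ + ‖v‖) ^ s with hβdef
    have hβ : 0 ≤ β := Real.rpow_nonneg hkb.le s
    have hαβ : α ≤ β := Real.rpow_le_rpow_of_nonpos hkb (by linarith) hs0
    have hX : (inner ℝ u v : ℝ) ≤ ‖u‖ * ‖v‖ := real_inner_le_norm u v
    have hexp : ‖α • u - β • v‖ ^ 2
        = α ^ 2 * ‖u‖ ^ 2 - 2 * (α * β) * (inner ℝ u v : ℝ) + β ^ 2 * ‖v‖ ^ 2 := by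
      rw [norm_sub_sq_real, norm_smul, norm_smul, real_inner_smul_left, real_inner_smul_right,
        Real.norm_eq_abs, Real.norm_eq_abs, abs_of_nonneg hα, abs_of_nonneg hβ]
      ring
    have hd : ‖u - v‖ ^ 2 = ‖u‖ ^ 2 - 2 * (inner ℝ u v : ℝ) + ‖v‖ ^ 2 := norm_sub_sq_real u v
    have hend : ((1 + s) * α * (‖u‖ - ‖v‖)) ^ 2 ≤ (α * ‖u‖ - β * ‖v‖) ^ 2 := by
      have hle := aux_sc_lower hs0 hs1 hκ (norm_nonneg v) hvu
      have h0 : 0 ≤ (1 + s) * α * (‖u‖ - ‖v‖) := by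
        apply mul_nonneg (mul_nonneg (by linarith) hα) (by linarith)
      exact pow_le_pow_left₀ h0 (by linarith) 2
    have hprod : 0 ≤ (α * β - ((1 + s) * α) ^ 2) * (‖u‖ * ‖v‖ - (inner ℝ u v : ℝ)) := by
      apply mul_nonneg _ (by linarith)
      have h1s : ((1:ℝ) + s) ^ 2 ≤ 1 := by nlinarith
      nlinarith [mul_le_mul_of_nonneg_left hαβ hα, sq_nonneg α]
    rw [hexp, hd]
    nlinarith [hend, hprod]

/-- The main estimate, in a real inner product space. -/
lemma aux_key {E : Type*} [NormedAddCommGroup E] [InnerProductSpace ℝ E]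
    {p : ℝ} (hp : 1 < p) (hp2 : p ≤ 2) {κ : ℝ} (hκ : 0 ≤ κ)
    (u v : E) (hvu : ‖v‖ ≤ ‖u‖) :
    ‖((κ + ‖u‖) ^ (p - 2)) • u - ((κ + ‖v‖) ^ (p - 2)) • v‖ ^ (p / (p - 1))
        ≤ (2 ^ (2 * (p / (p - 1)) - 2) * 4 / p ^ 2) *
          ‖((κ + ‖u‖) ^ ((p - 2) / 2)) • u - ((κ + ‖v‖) ^ ((p - 2) / 2)) • v‖ ^ 2
      ∧ ‖((κ + ‖u‖) ^ ((p - 2) / 2)) • u - ((κ + ‖v‖) ^ ((p - 2) / 2)) • v‖ ^ 2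
        ≤ 2 ^ ((4:ℝ) - p) * ‖u - v‖ ^ p := by
  have hp1 : (0:ℝ) < p - 1 := by linarith
  have hppos : (0:ℝ) < p := by linarith
  have hp'2 : 2 ≤ p / (p - 1) := by rw [le_div_iff₀ hp1]; linarith
  have hp'pos : 0 < p / (p - 1) := div_pos hppos hp1
  have ha : (0:ℝ) ≤ ‖u‖ := norm_nonneg u
  have hN : (0:ℝ) ≤ κ + ‖u‖ := by linarith
  by_cases hd0 : ‖u - v‖ = 0
  · have huv : u = v := by rwa [norm_eq_zero, sub_eq_zero] at hd0
    subst huv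
    constructor
    · simp only [sub_self, norm_zero]
      rw [Real.zero_rpow hp'pos.ne']
      positivity
    · simp only [sub_self, norm_zero]
      rw [Real.zero_rpow hppos.ne']
      norm_num
  · have hdpos : 0 < ‖u - v‖ := lt_of_le_of_ne (norm_nonneg _) (Ne.symm hd0)
    have hd2N : ‖u - v‖ ≤ 2 * (κ + ‖u‖) := by
      have := norm_sub_le u v
      linarith
    have hNpos : 0 < κ + ‖u‖ := by linarith
    have U1 := aux_vec_upper (by linarith : p - 2 ≤ 0) (by linarith : (-1:ℝ) ≤ p - 2) hκ hvu
    have U2 := aux_vec_upper (by linarith : (p - 2) / 2 ≤ 0)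
      (by linarith : (-1:ℝ) ≤ (p - 2) / 2) hκ hvu
    have L2 := aux_vec_lower (by linarith : (p - 2) / 2 ≤ 0)
      (by linarith : (-1:ℝ) < (p - 2) / 2) hκ hvu
    have hNs : ((κ + ‖u‖) ^ ((p - 2) / 2)) ^ 2 = (κ + ‖u‖) ^ (p - 2) := by
      rw [← Real.rpow_natCast ((κ + ‖u‖) ^ ((p - 2) / 2)) 2, ← Real.rpow_mul hN]
      norm_num
    constructor
    · -- first inequality
      have c1 : ‖((κ + ‖u‖) ^ (p - 2)) • u - ((κ + ‖v‖) ^ (p - 2)) • v‖ ^ (p / (p - 1))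
          ≤ (2 * (κ + ‖u‖) ^ (p - 2) * ‖u - v‖) ^ (p / (p - 1)) :=
        Real.rpow_le_rpow (norm_nonneg _) U1 hp'pos.le
      have c2 : (2 * (κ + ‖u‖) ^ (p - 2) * ‖u - v‖) ^ (p / (p - 1))
          = 2 ^ (p / (p - 1)) * ((κ + ‖u‖) ^ (p - 2)) ^ (p / (p - 1))
            * ‖u - v‖ ^ (p / (p - 1)) := by
        rw [Real.mul_rpow (by positivity) hdpos.le,
          Real.mul_rpow (by norm_num) (Real.rpow_nonneg hN _)]
      have c3 : ‖u - v‖ ^ (p / (p - 1))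
          = ‖u - v‖ ^ (p / (p - 1) - 2) * ‖u - v‖ ^ (2:ℝ) := by
        rw [← Real.rpow_add hdpos]
        congr 1
        ring
      have c4 : ‖u - v‖ ^ (p / (p - 1) - 2) ≤ (2 * (κ + ‖u‖)) ^ (p / (p - 1) - 2) :=
        Real.rpow_le_rpow hdpos.le hd2N (by linarith)
      have c5 : (2 * (κ + ‖u‖)) ^ (p / (p - 1) - 2)
          = 2 ^ (p / (p - 1) - 2) * (κ + ‖u‖) ^ (p / (p - 1) - 2) :=
        Real.mul_rpow (by norm_num) hN
      have c6 : ((κ + ‖u‖) ^ (p - 2)) ^ (p / (p - 1)) * (κ + ‖u‖) ^ (p / (p - 1) - 2)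
          = (κ + ‖u‖) ^ (p - 2) := by
        rw [← Real.rpow_mul hN, ← Real.rpow_add hNpos]
        congr 1
        field_simp
        ring
      have c7 : (2:ℝ) ^ (p / (p - 1)) * 2 ^ (p / (p - 1) - 2)
          = 2 ^ (2 * (p / (p - 1)) - 2) := by
        rw [← Real.rpow_add two_pos]
        congr 1
        ring
      have cc : ‖((κ + ‖u‖) ^ (p - 2)) • u - ((κ + ‖v‖) ^ (p - 2)) • v‖ ^ (p / (p - 1))
          ≤ 2 ^ (2 * (p / (p - 1)) - 2) * ((κ + ‖u‖) ^ (p - 2) * ‖u - v‖ ^ 2) := by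
        calc ‖((κ + ‖u‖) ^ (p - 2)) • u - ((κ + ‖v‖) ^ (p - 2)) • v‖ ^ (p / (p - 1))
            ≤ 2 ^ (p / (p - 1)) * ((κ + ‖u‖) ^ (p - 2)) ^ (p / (p - 1))
              * ‖u - v‖ ^ (p / (p - 1)) := by rw [← c2]; exact c1
          _ = 2 ^ (p / (p - 1)) * ((κ + ‖u‖) ^ (p - 2)) ^ (p / (p - 1))
              * (‖u - v‖ ^ (p / (p - 1) - 2) * ‖u - v‖ ^ (2:ℝ)) := by rw [← c3]
          _ ≤ 2 ^ (p / (p - 1)) * ((κ + ‖u‖) ^ (p - 2)) ^ (p / (p - 1))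
              * ((2 * (κ + ‖u‖)) ^ (p / (p - 1) - 2) * ‖u - v‖ ^ (2:ℝ)) := by
              have hpre : (0:ℝ) ≤ 2 ^ (p / (p - 1)) * ((κ + ‖u‖) ^ (p - 2)) ^ (p / (p - 1)) := by
                positivity
              exact mul_le_mul_of_nonneg_left
                (mul_le_mul_of_nonneg_right c4 (Real.rpow_nonneg hdpos.le _)) hpre
          _ = (2 ^ (p / (p - 1)) * 2 ^ (p / (p - 1) - 2))
              * (((κ + ‖u‖) ^ (p - 2)) ^ (p / (p - 1)) * (κ + ‖u‖) ^ (p / (p - 1) - 2))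
              * ‖u - v‖ ^ (2:ℝ) := by rw [c5]; ring
          _ = 2 ^ (2 * (p / (p - 1)) - 2) * ((κ + ‖u‖) ^ (p - 2) * ‖u - v‖ ^ 2) := by
              rw [c6, c7, Real.rpow_two]; ring
      have hL : (κ + ‖u‖) ^ (p - 2) * ‖u - v‖ ^ 2
          ≤ 4 / p ^ 2
            * ‖((κ + ‖u‖) ^ ((p - 2) / 2)) • u - ((κ + ‖v‖) ^ ((p - 2) / 2)) • v‖ ^ 2 := by
        have hLL : p ^ 2 / 4 * ((κ + ‖u‖) ^ (p - 2) * ‖u - v‖ ^ 2)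
            ≤ ‖((κ + ‖u‖) ^ ((p - 2) / 2)) • u - ((κ + ‖v‖) ^ ((p - 2) / 2)) • v‖ ^ 2 := by
          calc p ^ 2 / 4 * ((κ + ‖u‖) ^ (p - 2) * ‖u - v‖ ^ 2)
              = ((1 + (p - 2) / 2) * (κ + ‖u‖) ^ ((p - 2) / 2)) ^ 2 * ‖u - v‖ ^ 2 := by
                rw [mul_pow, hNs]; ring
            _ ≤ _ := L2
        rw [div_mul_eq_mul_div, le_div_iff₀ (by positivity : (0:ℝ) < p ^ 2)]
        nlinarith [hLL]
      calc ‖((κ + ‖u‖) ^ (p - 2)) • u - ((κ + ‖v‖) ^ (p - 2)) • v‖ ^ (p / (p - 1))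
          ≤ 2 ^ (2 * (p / (p - 1)) - 2) * ((κ + ‖u‖) ^ (p - 2) * ‖u - v‖ ^ 2) := cc
        _ ≤ 2 ^ (2 * (p / (p - 1)) - 2) * (4 / p ^ 2
            * ‖((κ + ‖u‖) ^ ((p - 2) / 2)) • u - ((κ + ‖v‖) ^ ((p - 2) / 2)) • v‖ ^ 2) :=
            mul_le_mul_of_nonneg_left hL (Real.rpow_nonneg (by norm_num) _)
        _ = 2 ^ (2 * (p / (p - 1)) - 2) * 4 / p ^ 2
            * ‖((κ + ‖u‖) ^ ((p - 2) / 2)) • u - ((κ + ‖v‖) ^ ((p - 2) / 2)) • v‖ ^ 2 := by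
            ring
    · -- second inequality
      have step1 : ‖((κ + ‖u‖) ^ ((p - 2) / 2)) • u - ((κ + ‖v‖) ^ ((p - 2) / 2)) • v‖ ^ 2
          ≤ 4 * (κ + ‖u‖) ^ (p - 2) * ‖u - v‖ ^ 2 := by
        calc ‖((κ + ‖u‖) ^ ((p - 2) / 2)) • u - ((κ + ‖v‖) ^ ((p - 2) / 2)) • v‖ ^ 2
            ≤ (2 * (κ + ‖u‖) ^ ((p - 2) / 2) * ‖u - v‖) ^ 2 :=
              pow_le_pow_left₀ (norm_nonneg _) U2 2
          _ = 4 * ((κ + ‖u‖) ^ ((p - 2) / 2)) ^ 2 * ‖u - v‖ ^ 2 := by ring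
          _ = 4 * (κ + ‖u‖) ^ (p - 2) * ‖u - v‖ ^ 2 := by rw [hNs]
      have step2 : ‖u - v‖ ^ 2 = ‖u - v‖ ^ ((2:ℝ) - p) * ‖u - v‖ ^ p := by
        rw [← Real.rpow_add hdpos, ← Real.rpow_two]
        congr 1
        ring
      have step3 : ‖u - v‖ ^ ((2:ℝ) - p) ≤ (2 * (κ + ‖u‖)) ^ ((2:ℝ) - p) :=
        Real.rpow_le_rpow hdpos.le hd2N (by linarith)
      have step4 : (2 * (κ + ‖u‖)) ^ ((2:ℝ) - p)
          = 2 ^ ((2:ℝ) - p) * (κ + ‖u‖) ^ ((2:ℝ) - p) :=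
        Real.mul_rpow (by norm_num) hN
      have step5 : (κ + ‖u‖) ^ (p - 2) * (κ + ‖u‖) ^ ((2:ℝ) - p) = 1 := by
        rw [← Real.rpow_add hNpos]
        norm_num
      have step6 : (4:ℝ) * 2 ^ ((2:ℝ) - p) = 2 ^ ((4:ℝ) - p) := by
        rw [show (4:ℝ) = 2 ^ (2:ℝ) by rw [Real.rpow_two]; norm_num, ← Real.rpow_add two_pos]
        congr 1
        ring
      calc ‖((κ + ‖u‖) ^ ((p - 2) / 2)) • u - ((κ + ‖v‖) ^ ((p - 2) / 2)) • v‖ ^ 2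
          ≤ 4 * (κ + ‖u‖) ^ (p - 2) * ‖u - v‖ ^ 2 := step1
        _ = 4 * (κ + ‖u‖) ^ (p - 2) * (‖u - v‖ ^ ((2:ℝ) - p) * ‖u - v‖ ^ p) := by
            rw [← step2]
        _ ≤ 4 * (κ + ‖u‖) ^ (p - 2) * ((2 * (κ + ‖u‖)) ^ ((2:ℝ) - p) * ‖u - v‖ ^ p) := by
            have h4N : (0:ℝ) ≤ 4 * (κ + ‖u‖) ^ (p - 2) := by positivity
            exact mul_le_mul_of_nonneg_left
              (mul_le_mul_of_nonneg_right step3 (Real.rpow_nonneg hdpos.le p)) h4N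
        _ = (4 * 2 ^ ((2:ℝ) - p)) * ((κ + ‖u‖) ^ (p - 2) * (κ + ‖u‖) ^ ((2:ℝ) - p))
            * ‖u - v‖ ^ p := by rw [step4]; ring
        _ = 2 ^ ((4:ℝ) - p) * ‖u - v‖ ^ p := by rw [step5, step6]; ring

end Vec

/-! ### Glue: matrices and the Euclidean space -/

noncomputable def emb {n : ℕ} (A : Matrix (Fin n) (Fin n) ℝ) :
    EuclideanSpace ℝ (Fin n × Fin n) :=
  WithLp.toLp 2 (fun x : Fin n × Fin n => A x.1 x.2)

lemma emb_sub {n : ℕ} (A B : Matrix (Fin n) (Fin n) ℝ) : emb (A - B) = emb A - emb B := rfl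

lemma emb_smul {n : ℕ} (c : ℝ) (A : Matrix (Fin n) (Fin n) ℝ) : emb (c • A) = c • emb A := rfl

lemma fnorm_emb {n : ℕ} (A : Matrix (Fin n) (Fin n) ℝ) : fnorm A = ‖emb A‖ := by
  rw [EuclideanSpace.norm_eq, fnorm]
  congr 1
  rw [Fintype.sum_prod_type]
  simp [emb, Real.norm_eq_abs, sq_abs]

lemma emb_Smap {n : ℕ} (p κ : ℝ) (A : Matrix (Fin n) (Fin n) ℝ) :
    emb (Smap p κ A) = ((κ + ‖emb A‖) ^ (p - 2)) • emb A := by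
  rw [Smap, emb_smul, fnorm_emb]

lemma emb_Vmap {n : ℕ} (p κ : ℝ) (A : Matrix (Fin n) (Fin n) ℝ) :
    emb (Vmap p κ A) = ((κ + ‖emb A‖) ^ ((p - 2) / 2)) • emb A := by
  rw [Vmap, emb_smul, fnorm_emb]

/-- For `1 < p ≤ 2` there exist constants `C₁, C₂ > 0`, depending only on `p` and `n`, such
that for every `κ ≥ 0` and all matrices `A, B`:
`|S(A) − S(B)|^{p'} ≤ C₁·|V(A) − V(B)|²` and `|V(A) − V(B)|² ≤ C₂·|A − B|^p`
where `p' = p/(p-1)`. -/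
theorem tensor_relation_p_le_two (n : ℕ) (hn : 1 ≤ n) (p : ℝ) (hp : 1 < p) (hp2 : p ≤ 2) :
    ∃ C₁ C₂ : ℝ, 0 < C₁ ∧ 0 < C₂ ∧
      ∀ κ : ℝ, 0 ≤ κ → ∀ A B : Matrix (Fin n) (Fin n) ℝ,
        fnorm (Smap p κ A - Smap p κ B) ^ (p / (p - 1))
            ≤ C₁ * fnorm (Vmap p κ A - Vmap p κ B) ^ 2
          ∧ fnorm (Vmap p κ A - Vmap p κ B) ^ 2 ≤ C₂ * fnorm (A - B) ^ p := by
  have hppos : (0:ℝ) < p := by linarith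
  refine ⟨2 ^ (2 * (p / (p - 1)) - 2) * 4 / p ^ 2, 2 ^ ((4:ℝ) - p), ?_, ?_, ?_⟩
  · exact div_pos (mul_pos (Real.rpow_pos_of_pos two_pos _) (by norm_num)) (pow_pos hppos 2)
  · exact Real.rpow_pos_of_pos two_pos _
  · intro κ hκ A B
    have hS : fnorm (Smap p κ A - Smap p κ B)
        = ‖((κ + ‖emb A‖) ^ (p - 2)) • emb A - ((κ + ‖emb B‖) ^ (p - 2)) • emb B‖ := by
      rw [fnorm_emb, emb_sub, emb_Smap, emb_Smap]
    have hV : fnorm (Vmap p κ A - Vmap p κ B)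
        = ‖((κ + ‖emb A‖) ^ ((p - 2) / 2)) • emb A
            - ((κ + ‖emb B‖) ^ ((p - 2) / 2)) • emb B‖ := by
      rw [fnorm_emb, emb_sub, emb_Vmap, emb_Vmap]
    have hAB : fnorm (A - B) = ‖emb A - emb B‖ := by rw [fnorm_emb, emb_sub]
    rw [hS, hV, hAB]
    rcases le_total (‖emb B‖) (‖emb A‖) with h | h
    · exact aux_key hp hp2 hκ (emb A) (emb B) h
    · obtain ⟨g1, g2⟩ := aux_key hp hp2 hκ (emb B) (emb A) h
      rw [norm_sub_rev (((κ + ‖emb A‖) ^ (p - 2)) • emb A),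
        norm_sub_rev (((κ + ‖emb A‖) ^ ((p - 2) / 2)) • emb A),
        norm_sub_rev (emb A)]
      exact ⟨g1, g2⟩
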